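/- Let a, b, c, d ≥ 0 with ab < 1 and 4b²cd < (1-ab)². If a nonnegative sequence (kᵢ) satisfies k₀ = 0 and k_{i+1} ≤ (b d + b kᵢ a)/(1 - b kᵢ c) whenever b kᵢ c < 1, then kᵢ ≤ s₁* := 2bd/(1 - ba + sqrt((1-ba)² - 4b²cd)) for all i, and in particular b c kᵢ ≤ 2b²cd/(1 - ba + sqrt((1-ba)² - 4b²cd)) < (1 - ab)/2 < 1. -/

import Mathlib

/-- Majorization: a nonnegative sequence `kᵢ` with `k₀ = 0` satisfying the
recursive inequality `k_{i+1} ≤ (b d + b kᵢ a)/(1 - b kᵢ c)` (whenever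
`b kᵢ c < 1`) is bounded by the smaller fixed point `s₁*`, and
`b c kᵢ ≤ 2 b² c d / (1 - b a + √((1-ba)² - 4b²cd)) < (1 - a b)/2 < 1`. -/
theorem stmt2 (a b c d : ℝ) (ha : 0 ≤ a) (hb : 0 ≤ b) (hc : 0 ≤ c) (hd : 0 ≤ d)
    (hab : a * b < 1) (hcd : 4 * b ^ 2 * c * d < (1 - a * b) ^ 2)
    (k : ℕ → ℝ) (hk : ∀ i, 0 ≤ k i) (h0 : k 0 = 0)
    (hrec : ∀ i, b * k i * c < 1 →
      k (i + 1) ≤ (b * d + b * k i * a) / (1 - b * k i * c)) :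
    let s1 : ℝ := 2 * b * d / (1 - b * a + Real.sqrt ((1 - b * a) ^ 2 - 4 * b ^ 2 * c * d))
    (∀ i, k i ≤ s1) ∧
    (∀ i, b * c * k i ≤
        2 * b ^ 2 * c * d / (1 - b * a + Real.sqrt ((1 - b * a) ^ 2 - 4 * b ^ 2 * c * d))) ∧
    2 * b ^ 2 * c * d / (1 - b * a + Real.sqrt ((1 - b * a) ^ 2 - 4 * b ^ 2 * c * d))
      < (1 - a * b) / 2 ∧ (1 - a * b) / 2 < 1 := by
  have hD : 0 < (1 - b * a) ^ 2 - 4 * b ^ 2 * c * d := by nlinarith [mul_comm a b]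
  set r := Real.sqrt ((1 - b * a) ^ 2 - 4 * b ^ 2 * c * d) with hrdef
  have hr2 : r ^ 2 = (1 - b * a) ^ 2 - 4 * b ^ 2 * c * d := Real.sq_sqrt hD.le
  have hrpos : 0 < r := Real.sqrt_pos.mpr hD
  have h1 : 0 < 1 - b * a := by nlinarith [mul_comm a b]
  have hden : 0 < 1 - b * a + r := by linarith
  intro s1
  have hs1nn : 0 ≤ s1 := by
    apply div_nonneg _ hden.le
    positivity
  have hfix : b * d + b * s1 * a = s1 * (1 - b * s1 * c) := by
    show b * d + b * (2 * b * d / (1 - b * a + r)) * a =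
      (2 * b * d / (1 - b * a + r)) * (1 - b * (2 * b * d / (1 - b * a + r)) * c)
    field_simp
    linear_combination b * d * hr2
  have hbcs1 : b * c * s1 = (1 - b * a - r) / 2 := by
    show b * c * (2 * b * d / (1 - b * a + r)) = _
    rw [← mul_div_assoc, div_eq_div_iff hden.ne' two_ne_zero]
    linear_combination hr2
  have heq : 2 * b ^ 2 * c * d / (1 - b * a + r) = b * c * s1 := by
    show _ = b * c * (2 * b * d / (1 - b * a + r))
    field_simp
  have hbcs1lt : b * c * s1 < 1 := by
    rw [hbcs1]; nlinarith [mul_nonneg ha hb]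
  have hbound : ∀ i, k i ≤ s1 := by
    intro i
    induction i with
    | zero => rw [h0]; exact hs1nn
    | succ n ih =>
      have hbckn : b * k n * c < 1 := by
        have h2 : b * c * k n ≤ b * c * s1 :=
          mul_le_mul_of_nonneg_left ih (mul_nonneg hb hc)
        nlinarith
      have hle := hrec n hbckn
      have hdenpos : 0 < 1 - b * k n * c := by linarith
      have h3 : (b * d + b * k n * a) / (1 - b * k n * c) ≤ s1 := by
        rw [div_le_iff₀ hdenpos]
        nlinarith [hfix,
          mul_nonneg (mul_nonneg (mul_nonneg hb hc) hs1nn) (sub_nonneg.mpr ih),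
          mul_nonneg (mul_nonneg hb ha) (sub_nonneg.mpr ih)]
      linarith
  refine ⟨hbound, ?_, ?_, ?_⟩
  · intro i
    rw [heq]
    exact mul_le_mul_of_nonneg_left (hbound i) (mul_nonneg hb hc)
  · rw [heq, hbcs1]
    nlinarith [mul_comm a b]
  · nlinarith [mul_nonneg ha hb]
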